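/- Fix n ≥ 1. Let q : ℚ → Prop model a query over the single parameter of the top-level service, let ψ : ℚ → (Fin n → ℚ) → Prop model the rule's condition relating the top-level parameter to the n sub-service parameters, and let r : Fin n → ℚ → Prop model the offers received from the n sub-negotiators. For each i : Fin n define the sub-query Q i : ℚ → Prop by Q i z := ∃ x (y : Fin n → ℚ), y i = z ∧ q x ∧ ψ x y ∧ (∀ j : Fin n, j < i → r j (y j)), and define the final offer R : ℚ → Prop by R x := ∃ y : Fin n → ℚ, ψ x y ∧ ∀ i : Fin n, r i (y i). If the last sub-offer intersects the last sub-query, i.e. ∃ z, Q ⟨n-1, _⟩ z ∧ r ⟨n-1, _⟩ z, then the final offer intersects the original query, i.e. ∃ x, q x ∧ R x. -/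
import Mathlib


theorem rule_correctness_n_subnegotiators
    (n : ℕ) (hn : 1 ≤ n)
    (q : ℚ → Prop) (ψ : ℚ → (Fin n → ℚ) → Prop) (r : Fin n → ℚ → Prop)
    (Q : Fin n → ℚ → Prop)
    (hQ : ∀ (i : Fin n) (z : ℚ),
      Q i z ↔ ∃ (x : ℚ) (y : Fin n → ℚ),
        y i = z ∧ q x ∧ ψ x y ∧ (∀ j : Fin n, j < i → r j (y j)))
    (R : ℚ → Prop)
    (hR : ∀ x : ℚ, R x ↔ ∃ y : Fin n → ℚ, ψ x y ∧ ∀ i : Fin n, r i (y i))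
    (h : ∃ z : ℚ, Q ⟨n - 1, by omega⟩ z ∧ r ⟨n - 1, by omega⟩ z) :
    ∃ x, q x ∧ R x := by
  obtain ⟨z, hQz, hrz⟩ := h
  rw [hQ] at hQz
  obtain ⟨x, y, hy, hqx, hψ, hlt⟩ := hQz
  refine ⟨x, hqx, (hR x).2 ⟨y, hψ, fun i => ?_⟩⟩
  by_cases hi : i.val < n - 1
  · exact hlt i (by simp only [Fin.lt_def]; exact hi)
  · have : i = (⟨n - 1, by omega⟩ : Fin n) := by
      apply Fin.ext
      have := i.isLt
      simp only
      omega
    rw [this, hy]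
    exact hrz
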